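/- Let M and A be sets and let X be a nonempty finite set of functions from M to A. Then the relational diversity rank function rk_X induced by X, defined by rk_X(x) = log₂ |{s↾x : s ∈ X}| for finite x ⊆ M, is a diversity rank function on M: it satisfies (R1) rk_X(∅) = 0, (R2) rk_X(x) ≤ rk_X(x ∪ y) ≤ rk_X(x) + rk_X(y), (R3) if rk_X(x ∪ y) = rk_X(x) then rk_X(x ∪ y ∪ z) = rk_X(x ∪ z), and (R4) if rk_X(x ∪ y ∪ z) = rk_X(x) + rk_X(y ∪ z) then rk_X(x ∪ y) = rk_X(x) + rk_X(y), for all finite x, y, z ⊆ M. -/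
import Mathlib

namespace RelRankAux

lemma ncard_sprod {γ δ : Type*} (s : Set γ) (t : Set δ) :
    (s ×ˢ t).ncard = s.ncard * t.ncard := by
  rw [← Nat.card_coe_set_eq, ← Nat.card_coe_set_eq, ← Nat.card_coe_set_eq,
    Nat.card_congr (Equiv.Set.prod s t), Nat.card_prod]

variable {α β : Type*} [DecidableEq α]

/-- The set of restrictions. -/
noncomputable def S (X : Finset (α → β)) (x : Finset α) : Set ((↑x : Set α) → β) :=
  (↑x : Set α).restrict '' (↑X : Set (α → β))

lemma S_fin (X : Finset (α → β)) (x : Finset α) : (S X x).Finite :=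
  X.finite_toSet.image _

lemma S_ne {X : Finset (α → β)} (hX : X.Nonempty) (x : Finset α) : (S X x).Nonempty :=
  (Finset.coe_nonempty.mpr hX).image _

/-- The number of restrictions. -/
noncomputable def N (X : Finset (α → β)) (x : Finset α) : ℕ := (S X x).ncard

lemma N_pos {X : Finset (α → β)} (hX : X.Nonempty) (x : Finset α) : 0 < N X x :=
  (Set.ncard_pos (S_fin X x)).mpr (S_ne hX x)

/-- Restriction map between function spaces. -/
def res {x y : Finset α} (h : x ⊆ y) (f : (↑y : Set α) → β) : (↑x : Set α) → β :=
  fun a => f ⟨a.1, Finset.coe_subset.mpr h a.2⟩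

lemma res_restrict {x y : Finset α} (h : x ⊆ y) (s : α → β) :
    res h ((↑y : Set α).restrict s) = (↑x : Set α).restrict s := rfl

lemma res_image {X : Finset (α → β)} {x y : Finset α} (h : x ⊆ y) :
    res (β := β) h '' S X y = S X x := by
  simp only [S, Set.image_image]
  rfl

lemma N_mono {X : Finset (α → β)} {x y : Finset α} (h : x ⊆ y) : N X x ≤ N X y := by
  rw [N, N, ← res_image (X := X) (β := β) h]
  exact Set.ncard_image_le (S_fin X y)

/-- Pair map. -/
def pm (x y : Finset α) (f : (↑(x ∪ y) : Set α) → β) :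
    ((↑x : Set α) → β) × ((↑y : Set α) → β) :=
  (res Finset.subset_union_left f, res Finset.subset_union_right f)

lemma pm_inj (x y : Finset α) : Function.Injective (pm (β := β) x y) := by
  intro f g hfg
  have h1 := congrArg Prod.fst hfg
  have h2 := congrArg Prod.snd hfg
  funext a
  obtain ⟨a, ha⟩ := a
  rcases Finset.mem_union.mp (Finset.mem_coe.mp ha) with h | h
  · exact congrFun h1 ⟨a, h⟩
  · exact congrFun h2 ⟨a, h⟩

lemma pm_image_subset (X : Finset (α → β)) (x y : Finset α) :
    pm x y '' S X (x ∪ y) ⊆ (S X x) ×ˢ (S X y) := by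
  rintro _ ⟨_, ⟨s, hs, rfl⟩, rfl⟩
  exact ⟨⟨s, hs, rfl⟩, ⟨s, hs, rfl⟩⟩

lemma N_union_le (X : Finset (α → β)) (x y : Finset α) : N X (x ∪ y) ≤ N X x * N X y :=
  calc N X (x ∪ y) = (pm x y '' S X (x ∪ y)).ncard :=
        (Set.ncard_image_of_injective _ (pm_inj x y)).symm
    _ ≤ ((S X x) ×ˢ (S X y)).ncard :=
        Set.ncard_le_ncard (pm_image_subset X x y) ((S_fin X x).prod (S_fin X y))
    _ = N X x * N X y := ncard_sprod _ _

lemma eqOn_extend {X : Finset (α → β)} {x y : Finset α} (h : N X (x ∪ y) = N X x) :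
    ∀ s ∈ X, ∀ t ∈ X, Set.EqOn s t ↑x → Set.EqOn s t ↑(x ∪ y) := by
  have hinj : Set.InjOn (res (β := β) (Finset.subset_union_left : x ⊆ x ∪ y))
      (S X (x ∪ y)) := by
    apply Set.injOn_of_ncard_image_eq ?_ (S_fin X (x ∪ y))
    rw [res_image]
    exact h.symm
  intro s hs t ht hxy
  have h1 : (↑(x ∪ y) : Set α).restrict s ∈ S X (x ∪ y) := ⟨s, hs, rfl⟩
  have h2 : (↑(x ∪ y) : Set α).restrict t ∈ S X (x ∪ y) := ⟨t, ht, rfl⟩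
  have hres : res (β := β) (Finset.subset_union_left : x ⊆ x ∪ y)
      ((↑(x ∪ y) : Set α).restrict s)
      = res (Finset.subset_union_left : x ⊆ x ∪ y) ((↑(x ∪ y) : Set α).restrict t) := by
    rw [res_restrict, res_restrict]
    exact Set.restrict_eq_restrict_iff.mpr hxy
  exact Set.restrict_eq_restrict_iff.mp (hinj h1 h2 hres)

lemma N_R3 {X : Finset (α → β)} {x y z : Finset α} (h : N X (x ∪ y) = N X x) :
    N X (x ∪ y ∪ z) = N X (x ∪ z) := by
  have key := eqOn_extend h
  have hsub : x ∪ z ⊆ x ∪ y ∪ z := by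
    intro a ha
    simp only [Finset.mem_union] at ha ⊢
    tauto
  have himg := res_image (X := X) (β := β) hsub
  have hinj : Set.InjOn (res (β := β) hsub) (S X (x ∪ y ∪ z)) := by
    rintro _ ⟨s, hs, rfl⟩ _ ⟨t, ht, rfl⟩ hres
    rw [res_restrict, res_restrict] at hres
    have hxz : Set.EqOn s t ↑(x ∪ z) := Set.restrict_eq_restrict_iff.mp hres
    have hx : Set.EqOn s t ↑x := fun a ha => hxz (by
      simp only [Finset.coe_union, Set.mem_union]; exact Or.inl ha)
    have hxy := key s hs t ht hx
    apply Set.restrict_eq_restrict_iff.mpr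
    intro a ha
    simp only [Finset.coe_union, Set.mem_union] at ha
    rcases ha with (ha | ha) | ha
    · exact hxy (by simp only [Finset.coe_union, Set.mem_union]; exact Or.inl ha)
    · exact hxy (by simp only [Finset.coe_union, Set.mem_union]; exact Or.inr ha)
    · exact hxz (by simp only [Finset.coe_union, Set.mem_union]; exact Or.inr ha)
  calc N X (x ∪ y ∪ z) = (res (β := β) hsub '' S X (x ∪ y ∪ z)).ncard :=
        (Set.ncard_image_of_injOn hinj).symm
    _ = N X (x ∪ z) := by rw [himg]; rfl

lemma N_R4 {X : Finset (α → β)} {x y z : Finset α}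
    (h : N X (x ∪ y ∪ z) = N X x * N X (y ∪ z)) :
    N X (x ∪ y) = N X x * N X y := by
  rw [Finset.union_assoc] at h
  -- the pair map to (x, y ∪ z) has image equal to the full product
  have himg : pm x (y ∪ z) '' S X (x ∪ (y ∪ z)) = (S X x) ×ˢ (S X (y ∪ z)) := by
    refine Set.eq_of_subset_of_ncard_le (pm_image_subset X x (y ∪ z)) ?_
      ((S_fin X x).prod (S_fin X (y ∪ z)))
    rw [ncard_sprod, Set.ncard_image_of_injective _ (pm_inj x (y ∪ z))]
    exact le_of_eq h.symm
  -- extract: every pair (u, w) is realized by one s ∈ X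
  have surj : ∀ u ∈ S X x, ∀ w ∈ S X (y ∪ z), ∃ s ∈ X,
      (↑x : Set α).restrict s = u ∧ (↑(y ∪ z) : Set α).restrict s = w := by
    intro u hu w hw
    have : (u, w) ∈ pm x (y ∪ z) '' S X (x ∪ (y ∪ z)) := himg ▸ Set.mem_prod.mpr ⟨hu, hw⟩
    obtain ⟨_, ⟨s, hs, rfl⟩, hpm⟩ := this
    refine ⟨s, hs, ?_, ?_⟩
    · exact congrArg Prod.fst hpm
    · exact congrArg Prod.snd hpm
  -- now the pair map to (x, y) is also surjective onto the product
  have himg2 : pm x y '' S X (x ∪ y) = (S X x) ×ˢ (S X y) := by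
    apply Set.Subset.antisymm (pm_image_subset X x y)
    rintro ⟨u, v⟩ ⟨hu, ht⟩
    obtain ⟨t, htX, rfl⟩ := ht
    obtain ⟨s, hs, hsx, hsyz⟩ := surj u hu ((↑(y ∪ z) : Set α).restrict t) ⟨t, htX, rfl⟩
    refine ⟨(↑(x ∪ y) : Set α).restrict s, ⟨s, hs, rfl⟩, ?_⟩
    have hy : (↑y : Set α).restrict s = (↑y : Set α).restrict t := by
      apply Set.restrict_eq_restrict_iff.mpr
      intro a ha
      exact Set.restrict_eq_restrict_iff.mp hsyz
        (by simp only [Finset.coe_union, Set.mem_union]; exact Or.inl ha)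
    exact Prod.ext (by rw [pm, res_restrict]; exact hsx) (by rw [pm, res_restrict]; exact hy)
  calc N X (x ∪ y) = (pm x y '' S X (x ∪ y)).ncard :=
        (Set.ncard_image_of_injective _ (pm_inj x y)).symm
    _ = N X x * N X y := by rw [himg2, ncard_sprod]; rfl

lemma N_empty {X : Finset (α → β)} (hX : X.Nonempty) : N X (∅ : Finset α) = 1 := by
  obtain ⟨s0, hs0⟩ := hX
  rw [N, Set.ncard_eq_one]
  refine ⟨(↑(∅ : Finset α) : Set α).restrict s0, ?_⟩
  apply Set.eq_singleton_iff_unique_mem.mpr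
  refine ⟨⟨s0, hs0, rfl⟩, ?_⟩
  rintro _ ⟨s, _, rfl⟩
  funext a
  exact absurd a.2 (by simp)

end RelRankAux

/-- The relational diversity rank induced by a team `X` of assignments `α → β`:
`rk_X(x) = log₂ |{s↾x : s ∈ X}|`. -/
noncomputable def relRank {α : Type*} {β : Type*} (X : Finset (α → β)) (x : Finset α) : ℝ :=
  Real.logb 2 (Set.ncard ((↑x : Set α).restrict '' (↑X : Set (α → β))))

theorem relRank_is_diversity_rank {α : Type*} {β : Type*} [DecidableEq α]
    (X : Finset (α → β)) (hX : X.Nonempty) :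
    (relRank X ∅ = 0) ∧
    (∀ x y : Finset α,
      relRank X x ≤ relRank X (x ∪ y) ∧ relRank X (x ∪ y) ≤ relRank X x + relRank X y) ∧
    (∀ x y z : Finset α,
      relRank X (x ∪ y) = relRank X x → relRank X (x ∪ y ∪ z) = relRank X (x ∪ z)) ∧
    (∀ x y z : Finset α,
      relRank X (x ∪ y ∪ z) = relRank X x + relRank X (y ∪ z) →
        relRank X (x ∪ y) = relRank X x + relRank X y) := by
  open RelRankAux in
  have hrk : ∀ x : Finset α, relRank X x = Real.logb 2 (RelRankAux.N X x) := fun _ => rfl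
  have hb : (1 : ℝ) < 2 := one_lt_two
  have hpos : ∀ x : Finset α, (0 : ℝ) < (RelRankAux.N X x : ℝ) :=
    fun x => by exact_mod_cast RelRankAux.N_pos hX x
  have hNeq : ∀ x y : Finset α, relRank X x = relRank X y → RelRankAux.N X x = RelRankAux.N X y := by
    intro x y hxy
    rw [hrk, hrk] at hxy
    exact_mod_cast Real.logb_injOn_pos hb (Set.mem_Ioi.mpr (hpos x)) (Set.mem_Ioi.mpr (hpos y)) hxy
  refine ⟨?_, ?_, ?_, ?_⟩
  · rw [hrk, RelRankAux.N_empty hX]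
    simp
  · intro x y
    constructor
    · rw [hrk, hrk]
      exact Real.logb_le_logb_of_le hb (hpos x)
        (by exact_mod_cast RelRankAux.N_mono Finset.subset_union_left)
    · rw [hrk, hrk, hrk, ← Real.logb_mul (hpos x).ne' (hpos y).ne']
      apply Real.logb_le_logb_of_le hb (hpos (x ∪ y))
      exact_mod_cast RelRankAux.N_union_le X x y
  · intro x y z hxy
    rw [hrk, hrk, RelRankAux.N_R3 (hNeq _ _ hxy)]
  · intro x y z hxyz
    have hN : RelRankAux.N X (x ∪ y ∪ z) = RelRankAux.N X x * RelRankAux.N X (y ∪ z) := by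
      rw [hrk, hrk, hrk, ← Real.logb_mul (hpos x).ne' (hpos (y ∪ z)).ne'] at hxyz
      have := Real.logb_injOn_pos hb (Set.mem_Ioi.mpr (hpos (x ∪ y ∪ z)))
        (Set.mem_Ioi.mpr (mul_pos (hpos x) (hpos (y ∪ z)))) hxyz
      exact_mod_cast this
    rw [hrk, hrk, hrk, RelRankAux.N_R4 hN, Nat.cast_mul,
      Real.logb_mul (hpos x).ne' (hpos y).ne']
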